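/- For every i ∈ {1, …, N} the following operator identities hold on smooth complex functions on Ω: Σ_{j=1}^N {x_j, S_{ij}} = 2x_i; Σ_{j=1}^N [x_j, S_{ij}] = 2[S, x_i]; Σ_{j=1}^N {∇_j, S_{ij}} = 2∇_i; Σ_{j=1}^N [∇_j, S_{ij}] = 2[S, ∇_i]. -/

import Mathlib

noncomputable section

open Finset

/-- Euclidean space `ℝ^N`. -/
abbrev E (N : ℕ) := EuclideanSpace ℝ (Fin N)

variable {N : ℕ}

/-- The reflection `s_α(x) = x - (2(α,x)/(α,α)) α`. -/
def sRefl (α x : E N) : E N := x - (2 * (inner ℝ α x : ℝ) / (inner ℝ α α : ℝ)) • α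

/-- Action of the reflection `s_α` on functions: `(s_α ψ)(x) = ψ(s_α⁻¹ x) = ψ(s_α x)`. -/
def refOp (α : E N) (f : E N → ℂ) : E N → ℂ := fun x => f (sRefl α x)

/-- Multiplication by the `k`-th coordinate. -/
def mulX (k : Fin N) (f : E N → ℂ) : E N → ℂ := fun x => (x k : ℂ) * f x

/-- The partial derivative `∂_i`. -/
def pd (i : Fin N) (f : E N → ℂ) : E N → ℂ :=
  fun x => fderiv ℝ f x (EuclideanSpace.single i 1)

/-- The Dunkl operator `∇_i = ∂_i − Σ_{α∈𝓡₊} g_α α_i (α,x)⁻¹ s_α`. -/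
def dunkl (Rp : Finset (E N)) (g : E N → ℂ) (i : Fin N) (f : E N → ℂ) : E N → ℂ :=
  fun x => pd i f x - ∑ α ∈ Rp, g α * (α i : ℂ) * ((inner ℝ α x : ℝ) : ℂ)⁻¹ * refOp α f x

/-- The operator `S_{ij} = δ_{ij} + Σ_{α∈𝓡₊} (2 g_α α_i α_j/(α,α)) s_α`. -/
def Sop (Rp : Finset (E N)) (g : E N → ℂ) (i j : Fin N) (f : E N → ℂ) : E N → ℂ :=
  fun x => (if i = j then 1 else 0) * f x
    + ∑ α ∈ Rp, 2 * g α * (α i : ℂ) * (α j : ℂ) / ((inner ℝ α α : ℝ) : ℂ) * refOp α f x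

/-- The element `S = −Σ_{α∈𝓡₊} g_α s_α` acting as an operator. -/
def Sbig (Rp : Finset (E N)) (g : E N → ℂ) (f : E N → ℂ) : E N → ℂ :=
  fun x => -∑ α ∈ Rp, g α * refOp α f x

/-- The Dunkl angular momentum `L_{ij} = x_i ∇_j − x_j ∇_i`. -/
def Lop (Rp : Finset (E N)) (g : E N → ℂ) (i j : Fin N) (f : E N → ℂ) : E N → ℂ :=
  fun x => (x i : ℂ) * dunkl Rp g j f x - (x j : ℂ) * dunkl Rp g i f x

/-- The Dunkl Laplacian `∇² = Σ_j ∇_j²`. -/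
def lapD (Rp : Finset (E N)) (g : E N → ℂ) (f : E N → ℂ) : E N → ℂ :=
  fun x => ∑ j, dunkl Rp g j (dunkl Rp g j f) x

/-- The Dunkl--Coulomb Hamiltonian `ℋ_γ = Σ_i ∇_i² + 2γ r⁻¹`. -/
def ham (Rp : Finset (E N)) (g : E N → ℂ) (γ : ℂ) (f : E N → ℂ) : E N → ℂ :=
  fun x => lapD Rp g f x + 2 * γ * (‖x‖ : ℂ)⁻¹ * f x

/-- The Dunkl Laplace--Runge--Lenz vector component
`A_i = −(1/2) Σ_j {L_{ij}, ∇_j} + (1/2)[∇_i, S] − γ x_i r⁻¹`. -/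
def lrl (Rp : Finset (E N)) (g : E N → ℂ) (γ : ℂ) (i : Fin N) (f : E N → ℂ) : E N → ℂ :=
  fun x =>
    -(1 / 2 : ℂ) * ∑ j, (Lop Rp g i j (dunkl Rp g j f) x + dunkl Rp g j (Lop Rp g i j f) x)
    + (1 / 2 : ℂ) * (dunkl Rp g i (Sbig Rp g f) x - Sbig Rp g (dunkl Rp g i f) x)
    - γ * (x i : ℂ) * (‖x‖ : ℂ)⁻¹ * f x

/-- The Euler operator `r∂_r = Σ_k x_k ∂_k`. -/
def euler (f : E N → ℂ) : E N → ℂ := fun x => ∑ k, (x k : ℂ) * pd k f x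

namespace Aux3

lemma sRefl_coord (α x : E N) (k : Fin N) :
    sRefl α x k = x k - (2 * (inner ℝ α x : ℝ) / (inner ℝ α α : ℝ)) * α k := by
  simp [sRefl]

lemma inner_sRefl_right (α x y : E N) :
    (inner ℝ x (sRefl α y) : ℝ) = (inner ℝ (sRefl α x) y : ℝ) := by
  simp only [sRefl, inner_sub_right, inner_sub_left, real_inner_smul_right,
    real_inner_smul_left]
  rw [real_inner_comm α x, real_inner_comm x α]
  ring

lemma inner_self_sRefl (α : E N) (hα : α ≠ 0) (x : E N) :
    (inner ℝ α (sRefl α x) : ℝ) = -(inner ℝ α x : ℝ) := by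
  have h : (inner ℝ α α : ℝ) ≠ 0 := inner_self_ne_zero.mpr hα
  simp only [sRefl, inner_sub_right, real_inner_smul_right]
  rw [div_mul_cancel₀ _ h]; ring

lemma sRefl_neg (α x : E N) : sRefl (-α) x = sRefl α x := by
  simp only [sRefl, inner_neg_left, inner_neg_right, neg_neg, smul_neg, neg_div, neg_neg,
    neg_smul]
  module

/-- `s_α` as a continuous linear map. -/
def sL (α : E N) : E N →L[ℝ] E N :=
  ContinuousLinearMap.id ℝ (E N) - (2 / (inner ℝ α α : ℝ)) • ((innerSL ℝ α).smulRight α)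

lemma sL_apply (α x : E N) : sL α x = sRefl α x := by
  simp only [sL, sRefl, ContinuousLinearMap.sub_apply, ContinuousLinearMap.id_apply,
    ContinuousLinearMap.smul_apply, ContinuousLinearMap.smulRight_apply, innerSL_apply_apply,
    smul_smul]
  congr 1
  ring

lemma sRefl_invol (α : E N) (hα : α ≠ 0) (x : E N) : sRefl α (sRefl α x) = x := by
  have h : (inner ℝ α α : ℝ) ≠ 0 := inner_self_ne_zero.mpr hα
  simp only [sRefl, inner_sub_right, real_inner_smul_right]
  rw [div_mul_cancel₀ _ h]
  match_scalars <;> ring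

lemma inner_sRefl_sRefl (α : E N) (hα : α ≠ 0) (u v : E N) :
    (inner ℝ (sRefl α u) (sRefl α v) : ℝ) = (inner ℝ u v : ℝ) := by
  rw [inner_sRefl_right, sRefl_invol α hα]

lemma sRefl_sub_smul (α u v : E N) (c : ℝ) :
    sRefl α (u - c • v) = sRefl α u - c • sRefl α v := by
  rw [← sL_apply, ← sL_apply, ← sL_apply, map_sub, map_smul]

lemma sRefl_neg_arg (α x : E N) : sRefl α (-x) = -(sRefl α x) := by
  rw [← sL_apply, ← sL_apply, map_neg]

lemma sRefl_self (α : E N) (hα : α ≠ 0) : sRefl α α = -α := by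
  have h : (inner ℝ α α : ℝ) ≠ 0 := inner_self_ne_zero.mpr hα
  simp only [sRefl]
  rw [mul_div_assoc, div_self h]
  match_scalars <;> ring

lemma braid (α β x : E N) (hα : α ≠ 0) :
    sRefl (sRefl α β) x = sRefl α (sRefl β (sRefl α x)) := by
  have h1 : sRefl α (sRefl β (sRefl α x))
      = x - (2 * (inner ℝ β (sRefl α x) : ℝ) / (inner ℝ β β : ℝ)) • sRefl α β := by
    rw [show sRefl β (sRefl α x)
        = sRefl α x - (2 * (inner ℝ β (sRefl α x) : ℝ) / (inner ℝ β β : ℝ)) • β from rfl,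
      sRefl_sub_smul, sRefl_invol α hα]
  rw [h1]
  rw [show sRefl (sRefl α β) x
      = x - (2 * (inner ℝ (sRefl α β) x : ℝ) / (inner ℝ (sRefl α β) (sRefl α β) : ℝ)) • sRefl α β
      from rfl]
  rw [← inner_sRefl_right, inner_sRefl_sRefl α hα]

lemma braid' (α β x : E N) (hα : α ≠ 0) :
    sRefl β (sRefl α x) = sRefl α (sRefl (sRefl α β) x) := by
  rw [braid α β x hα, sRefl_invol α hα]

lemma inner_single (α : E N) (k : Fin N) :
    (inner ℝ α (EuclideanSpace.single k (1:ℝ)) : ℝ) = α k := by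
  rw [EuclideanSpace.inner_single_right]; simp

lemma sum_single (α : E N) : ∑ k, α k • EuclideanSpace.single k (1:ℝ) = α := by
  ext m
  have : (∑ k, α k • EuclideanSpace.single k (1:ℝ)) m
      = ∑ k, (α k • EuclideanSpace.single k (1:ℝ)) m :=
    by rw [WithLp.ofLp_sum]; exact Finset.sum_apply m Finset.univ _
  rw [this]
  simp [EuclideanSpace.single_apply]

lemma inner_sum_c (α β : E N) : ∑ k, (α k : ℂ) * (β k : ℂ) = ((inner ℝ α β : ℝ) : ℂ) := by
  rw [show (inner ℝ α β : ℝ) = ∑ k, α k * β k from by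
    rw [PiLp.inner_apply]; exact Finset.sum_congr rfl fun k _ => by simp [mul_comm]]
  push_cast
  rfl

/-! Analysis lemmas -/

lemma aux_isOpen (R : Finset (E N)) :
    IsOpen {x : E N | ∀ α ∈ R, (inner ℝ α x : ℝ) ≠ 0} := by
  have : {x : E N | ∀ α ∈ R, (inner ℝ α x : ℝ) ≠ 0}
      = ⋂ α ∈ R, ((fun x : E N => (inner ℝ α x : ℝ)) ⁻¹' {(0:ℝ)}ᶜ) := by
    ext x; simp
  rw [this]
  exact isOpen_biInter_finset fun α _ =>
    isOpen_compl_singleton.preimage (innerSL ℝ α).continuous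

lemma aux_diffAt {R : Finset (E N)} {f : E N → ℂ}
    (hf : ContDiffOn ℝ (⊤ : ℕ∞) f {x : E N | ∀ α ∈ R, (inner ℝ α x : ℝ) ≠ 0})
    {x : E N} (hx : ∀ α ∈ R, (inner ℝ α x : ℝ) ≠ 0) : DifferentiableAt ℝ f x :=
  (hf.contDiffAt ((aux_isOpen R).mem_nhds hx)).differentiableAt (by simp)

lemma refOp_eq_comp (α : E N) (f : E N → ℂ) : refOp α f = f ∘ (sL α) := by
  funext y; simp [refOp, sL_apply]

lemma aux_diff_refOp {f : E N → ℂ} {α x : E N}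
    (hd : DifferentiableAt ℝ f (sRefl α x)) : DifferentiableAt ℝ (refOp α f) x := by
  rw [refOp_eq_comp]
  have hd' : DifferentiableAt ℝ f (sL α x) := by rw [sL_apply]; exact hd
  exact hd'.comp x (sL α).differentiableAt

lemma pd_refOp (α : E N) (f : E N → ℂ) (x : E N) (k : Fin N)
    (hd : DifferentiableAt ℝ f (sRefl α x)) :
    pd k (refOp α f) x = fderiv ℝ f (sRefl α x) (sL α (EuclideanSpace.single k 1)) := by
  rw [refOp_eq_comp]
  have hd' : DifferentiableAt ℝ f (sL α x) := by rw [sL_apply]; exact hd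
  show fderiv ℝ (f ∘ sL α) x _ = _
  rw [fderiv_comp x hd' (sL α).differentiableAt, (sL α).fderiv]
  simp [sL_apply]

lemma pd_add (k : Fin N) {f g : E N → ℂ} {x : E N}
    (hf : DifferentiableAt ℝ f x) (hg : DifferentiableAt ℝ g x) :
    pd k (fun y => f y + g y) x = pd k f x + pd k g x := by
  simp [pd, fderiv_fun_add hf hg]

lemma pd_const_mul (k : Fin N) (c : ℂ) {f : E N → ℂ} {x : E N}
    (hf : DifferentiableAt ℝ f x) :
    pd k (fun y => c * f y) x = c * pd k f x := by
  simp [pd, fderiv_const_mul hf c]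

lemma pd_neg (k : Fin N) (f : E N → ℂ) (x : E N) :
    pd k (fun y => -f y) x = -pd k f x := by
  simp [pd, fderiv_neg]

lemma pd_sum (k : Fin N) {s : Finset (E N)} {F : E N → E N → ℂ} {x : E N}
    (h : ∀ α ∈ s, DifferentiableAt ℝ (F α) x) :
    pd k (fun y => ∑ α ∈ s, F α y) x = ∑ α ∈ s, pd k (F α) x := by
  simp [pd, fderiv_fun_sum h]

lemma smul_c (r : ℝ) (z : ℂ) : r • z = (r : ℂ) * z := Complex.real_smul

lemma fderiv_sum_coord (L : E N →L[ℝ] ℂ) (α : E N) :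
    ∑ k, (α k : ℂ) * L (EuclideanSpace.single k 1) = L α := by
  conv_rhs => rw [← sum_single α]
  rw [map_sum]
  exact Finset.sum_congr rfl fun k _ => by rw [map_smul, smul_c]

lemma sL_single (α : E N) (k : Fin N) :
    sL α (EuclideanSpace.single k 1)
      = EuclideanSpace.single k 1 - (2 * α k / (inner ℝ α α : ℝ)) • α := by
  rw [sL_apply]
  simp only [sRefl, inner_single]

lemma sL_self (α : E N) (hα : α ≠ 0) : sL α α = -α := by
  rw [sL_apply, sRefl_self α hα]

/-- Derivative part of equivariance. -/
lemma pd_refOp_expand (α : E N) (f : E N → ℂ) (x : E N) (k : Fin N)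
    (hd : DifferentiableAt ℝ f (sRefl α x)) :
    pd k (refOp α f) x
      = pd k f (sRefl α x)
        - ((2 * α k / (inner ℝ α α : ℝ) : ℝ) : ℂ) * (fderiv ℝ f (sRefl α x) α) := by
  rw [pd_refOp α f x k hd, sL_single, map_sub, map_smul, smul_c]
  rfl

lemma sum_pd_refOp (α : E N) (hα : α ≠ 0) (f : E N → ℂ) (x : E N)
    (hd : DifferentiableAt ℝ f (sRefl α x)) :
    ∑ k, (α k : ℂ) * pd k (refOp α f) x = -(fderiv ℝ f (sRefl α x) α) := by
  have h1 : ∀ k : Fin N, pd k (refOp α f) x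
      = ((fderiv ℝ f (sRefl α x)).comp (sL α)) (EuclideanSpace.single k 1) :=
    fun k => pd_refOp α f x k hd
  calc ∑ k, (α k : ℂ) * pd k (refOp α f) x
      = ∑ k, (α k : ℂ) * ((fderiv ℝ f (sRefl α x)).comp (sL α)) (EuclideanSpace.single k 1) :=
        Finset.sum_congr rfl fun k _ => by rw [h1]
    _ = ((fderiv ℝ f (sRefl α x)).comp (sL α)) α := fderiv_sum_coord _ α
    _ = fderiv ℝ f (sRefl α x) (sL α α) := rfl
    _ = -(fderiv ℝ f (sRefl α x) α) := by rw [sL_self α hα, map_neg]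

/-- Full derivative-part equivariance. -/
lemma pd_equiv (α : E N) (hα : α ≠ 0) (f : E N → ℂ) (x : E N) (j : Fin N)
    (hd : DifferentiableAt ℝ f (sRefl α x)) :
    pd j f (sRefl α x)
      = pd j (refOp α f) x
        - ((2 * α j / (inner ℝ α α : ℝ) : ℝ) : ℂ)
            * ∑ k, (α k : ℂ) * pd k (refOp α f) x := by
  rw [sum_pd_refOp α hα f x hd, pd_refOp_expand α f x j hd]
  ring

lemma delta_sum (i : Fin N) (z : Fin N → ℂ) :
    ∑ j, (if i = j then 1 else 0) * z j = z i := by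
  simp

lemma swap_collect (s : Finset (E N)) (i : Fin N) (c : E N → ℂ) (T : E N → Fin N → ℂ) :
    ∑ j, ∑ α ∈ s, 2 * c α * (α i : ℂ) * (α j : ℂ) / ((inner ℝ α α : ℝ) : ℂ) * T α j
      = ∑ α ∈ s, 2 * c α * (α i : ℂ) / ((inner ℝ α α : ℝ) : ℂ) * ∑ j, (α j : ℂ) * T α j := by
  rw [Finset.sum_comm]
  refine Finset.sum_congr rfl fun α _ => ?_
  rw [Finset.mul_sum]
  exact Finset.sum_congr rfl fun j _ => by ring

lemma reindex (R Rp : Finset (E N))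
    (hRinv : ∀ α ∈ R, ∀ β ∈ R, sRefl α β ∈ R)
    (hsub : Rp ⊆ R)
    (hpos : ∀ α ∈ R, (α ∈ Rp ∧ -α ∉ Rp) ∨ (-α ∈ Rp ∧ α ∉ Rp))
    (α : E N) (hα : α ∈ Rp) (hα0 : α ≠ 0)
    (T : E N → ℂ) (hT : ∀ β ∈ R, T (-β) = T β) :
    ∑ β ∈ Rp, T (sRefl α β) = ∑ β ∈ Rp, T β := by
  classical
  have hαR : α ∈ R := hsub hα
  set pick : E N → E N := fun β => if sRefl α β ∈ Rp then sRefl α β else -(sRefl α β)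
    with hpick
  have hmem : ∀ β ∈ Rp, pick β ∈ Rp := by
    intro β hβ
    by_cases hc : sRefl α β ∈ Rp
    · simp [hpick, hc]
    · have hsR : sRefl α β ∈ R := hRinv α hαR β (hsub hβ)
      rcases hpos _ hsR with ⟨h1, _⟩ | ⟨h1, _⟩
      · exact absurd h1 hc
      · simp only [hpick, hc, if_false]; exact h1
  have hinvol : ∀ β ∈ Rp, pick (pick β) = β := by
    intro β hβ
    by_cases hc : sRefl α β ∈ Rp
    · simp [hpick, hc, sRefl_invol α hα0, hβ]
    · have hnb : -β ∉ Rp := by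
        rcases hpos β (hsub hβ) with ⟨_, h2⟩ | ⟨_, h2⟩
        · exact h2
        · exact absurd hβ h2
      simp only [hpick, hc, if_false, sRefl_neg_arg, sRefl_invol α hα0, hnb, neg_neg]
  have hval : ∀ β ∈ Rp, T (sRefl α β) = T (pick β) := by
    intro β hβ
    by_cases hc : sRefl α β ∈ Rp
    · simp [hpick, hc]
    · simp only [hpick, hc, if_false]
      exact (hT (sRefl α β) (hRinv α hαR β (hsub hβ))).symm
  rw [Finset.sum_congr rfl hval]
  exact Finset.sum_nbij' pick pick hmem hmem hinvol hinvol (fun β hβ => rfl)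

lemma refl_equiv (R Rp : Finset (E N)) (g : E N → ℂ)
    (hR0 : ∀ α ∈ R, α ≠ (0 : E N))
    (hRinv : ∀ α ∈ R, ∀ β ∈ R, sRefl α β ∈ R)
    (hsub : Rp ⊆ R)
    (hpos : ∀ α ∈ R, (α ∈ Rp ∧ -α ∉ Rp) ∨ (-α ∈ Rp ∧ α ∉ Rp))
    (hg : ∀ α ∈ R, ∀ β ∈ R, g (sRefl β α) = g α)
    (f : E N → ℂ) (x : E N)
    (α : E N) (hα : α ∈ Rp) (j : Fin N) :
    ∑ β ∈ Rp, g β * (β j : ℂ) * ((inner ℝ β (sRefl α x) : ℝ) : ℂ)⁻¹ * f (sRefl β (sRefl α x))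
      = ∑ β ∈ Rp, g β * ((sRefl α β) j : ℂ) * ((inner ℝ β x : ℝ) : ℂ)⁻¹
          * f (sRefl α (sRefl β x)) := by
  have hαR : α ∈ R := hsub hα
  have hα0 : α ≠ 0 := hR0 α hαR
  set T : E N → ℂ := fun γ => g γ * ((sRefl α γ) j : ℂ) * ((inner ℝ γ x : ℝ) : ℂ)⁻¹
      * f (sRefl α (sRefl γ x)) with hT
  have step1 : ∀ β ∈ Rp,
      g β * (β j : ℂ) * ((inner ℝ β (sRefl α x) : ℝ) : ℂ)⁻¹ * f (sRefl β (sRefl α x))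
        = T (sRefl α β) := by
    intro β hβ
    have hβR : β ∈ R := hsub hβ
    rw [hT]
    simp only
    rw [hg β hβR α hαR, sRefl_invol α hα0, ← inner_sRefl_right, ← braid' α β x hα0]
  have heven : ∀ γ ∈ R, T (-γ) = T γ := by
    intro γ hγ
    have hγ0 : γ ≠ 0 := hR0 γ hγ
    have hgneg : g (-γ) = g γ := by
      have := hg γ hγ γ hγ
      rwa [sRefl_self γ hγ0] at this
    rw [hT]
    simp only [hgneg, sRefl_neg_arg, sRefl_neg, inner_neg_left]
    have h1 : ((-(sRefl α γ)) j : ℂ) = -((sRefl α γ) j : ℂ) := by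
      push_cast [PiLp.neg_apply]
      ring
    rw [h1]
    push_cast
    rw [inv_neg]
    ring
  rw [Finset.sum_congr rfl step1]
  exact reindex R Rp hRinv hsub hpos α hα hα0 T heven

lemma refl_expand (Rp : Finset (E N)) (g : E N → ℂ) (f : E N → ℂ) (x : E N)
    (α : E N) (j : Fin N) :
    ∑ β ∈ Rp, g β * ((sRefl α β) j : ℂ) * ((inner ℝ β x : ℝ) : ℂ)⁻¹ * f (sRefl α (sRefl β x))
      = (∑ β ∈ Rp, g β * (β j : ℂ) * ((inner ℝ β x : ℝ) : ℂ)⁻¹ * f (sRefl α (sRefl β x)))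
        - ((2 * α j / (inner ℝ α α : ℝ) : ℝ) : ℂ)
            * ∑ k, (α k : ℂ) * ∑ β ∈ Rp, g β * (β k : ℂ) * ((inner ℝ β x : ℝ) : ℂ)⁻¹
                * f (sRefl α (sRefl β x)) := by
  have hswap : ∑ k, (α k : ℂ) * ∑ β ∈ Rp, g β * (β k : ℂ) * ((inner ℝ β x : ℝ) : ℂ)⁻¹
      * f (sRefl α (sRefl β x))
      = ∑ β ∈ Rp, ((inner ℝ α β : ℝ) : ℂ) * (g β * ((inner ℝ β x : ℝ) : ℂ)⁻¹
          * f (sRefl α (sRefl β x))) := by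
    have h1 : ∀ k : Fin N, (α k : ℂ) * ∑ β ∈ Rp, g β * (β k : ℂ) * ((inner ℝ β x : ℝ) : ℂ)⁻¹
        * f (sRefl α (sRefl β x))
        = ∑ β ∈ Rp, (α k : ℂ) * (β k : ℂ) * (g β * ((inner ℝ β x : ℝ) : ℂ)⁻¹
            * f (sRefl α (sRefl β x))) := by
      intro k
      rw [Finset.mul_sum]
      exact Finset.sum_congr rfl fun β _ => by ring
    rw [Finset.sum_congr rfl fun k _ => h1 k, Finset.sum_comm]
    refine Finset.sum_congr rfl fun β _ => ?_
    rw [← Finset.sum_mul, inner_sum_c]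
  rw [hswap, Finset.mul_sum, ← Finset.sum_sub_distrib]
  refine Finset.sum_congr rfl fun β _ => ?_
  rw [show (sRefl α β) j = β j - (2 * (inner ℝ α β : ℝ) / (inner ℝ α α : ℝ)) * α j from
    sRefl_coord α β j]
  push_cast
  ring

lemma dunkl_lincomb (Rp : Finset (E N)) (g : E N → ℂ) (j : Fin N) (x : E N)
    (c0 : ℂ) (f : E N → ℂ) (s : Finset (E N)) (c : E N → ℂ) (F : E N → E N → ℂ)
    (hdf : DifferentiableAt ℝ f x) (hdF : ∀ α ∈ s, DifferentiableAt ℝ (F α) x) :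
    dunkl Rp g j (fun y => c0 * f y + ∑ α ∈ s, c α * F α y) x
      = c0 * dunkl Rp g j f x + ∑ α ∈ s, c α * dunkl Rp g j (F α) x := by
  have hds : DifferentiableAt ℝ (fun y => ∑ α ∈ s, c α * F α y) x :=
    DifferentiableAt.fun_sum fun α hα => (hdF α hα).const_mul (c α)
  have hpd : pd j (fun y => c0 * f y + ∑ α ∈ s, c α * F α y) x
      = c0 * pd j f x + ∑ α ∈ s, c α * pd j (F α) x := by
    rw [pd_add j (hdf.const_mul c0) hds, pd_const_mul j c0 hdf,
      pd_sum j fun α hα => (hdF α hα).const_mul (c α)]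
    congr 1
    exact Finset.sum_congr rfl fun α hα => pd_const_mul j (c α) (hdF α hα)
  simp only [dunkl, refOp]
  rw [hpd]
  have hrefl : ∑ β ∈ Rp, g β * (β j : ℂ) * ((inner ℝ β x : ℝ) : ℂ)⁻¹
        * (c0 * f (sRefl β x) + ∑ α ∈ s, c α * F α (sRefl β x))
      = c0 * ∑ β ∈ Rp, g β * (β j : ℂ) * ((inner ℝ β x : ℝ) : ℂ)⁻¹ * f (sRefl β x)
        + ∑ α ∈ s, c α * ∑ β ∈ Rp, g β * (β j : ℂ) * ((inner ℝ β x : ℝ) : ℂ)⁻¹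
            * F α (sRefl β x) := by
    have h2 : ∀ β ∈ Rp, g β * (β j : ℂ) * ((inner ℝ β x : ℝ) : ℂ)⁻¹
        * (c0 * f (sRefl β x) + ∑ α ∈ s, c α * F α (sRefl β x))
        = c0 * (g β * (β j : ℂ) * ((inner ℝ β x : ℝ) : ℂ)⁻¹ * f (sRefl β x))
          + ∑ α ∈ s, c α * (g β * (β j : ℂ) * ((inner ℝ β x : ℝ) : ℂ)⁻¹
              * F α (sRefl β x)) := by
      intro β _
      rw [mul_add, Finset.mul_sum]
      congr 1
      · ring
      · exact Finset.sum_congr rfl fun α _ => by ring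
    rw [Finset.sum_congr rfl h2, Finset.sum_add_distrib]
    congr 1
    · rw [Finset.mul_sum]
    · rw [Finset.sum_comm]
      exact Finset.sum_congr rfl fun α _ => by rw [Finset.mul_sum]
  rw [hrefl]
  have h3 : ∀ α ∈ s, c α * (pd j (F α) x - ∑ β ∈ Rp, g β * (β j : ℂ)
        * ((inner ℝ β x : ℝ) : ℂ)⁻¹ * F α (sRefl β x))
      = c α * pd j (F α) x - c α * ∑ β ∈ Rp, g β * (β j : ℂ) * ((inner ℝ β x : ℝ) : ℂ)⁻¹
          * F α (sRefl β x) := fun α _ => by ring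
  rw [Finset.sum_congr rfl h3, Finset.sum_sub_distrib]
  ring

lemma dunkl_negsum (Rp : Finset (E N)) (g : E N → ℂ) (j : Fin N) (x : E N)
    (s : Finset (E N)) (c : E N → ℂ) (F : E N → E N → ℂ)
    (hdF : ∀ α ∈ s, DifferentiableAt ℝ (F α) x) :
    dunkl Rp g j (fun y => -∑ α ∈ s, c α * F α y) x
      = -∑ α ∈ s, c α * dunkl Rp g j (F α) x := by
  have h0 : (fun y => -∑ α ∈ s, c α * F α y)
      = fun y => (-1 : ℂ) * ∑ α ∈ s, c α * F α y := by
    funext y; ring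
  have h1 : dunkl Rp g j (fun y => (0:ℂ) * (fun _ => (0:ℂ)) y + ∑ α ∈ s,
      (-(c α)) * F α y) x
      = (0:ℂ) * dunkl Rp g j (fun _ => (0:ℂ)) x + ∑ α ∈ s,
          (-(c α)) * dunkl Rp g j (F α) x :=
    dunkl_lincomb Rp g j x 0 (fun _ => (0:ℂ)) s (fun α => -(c α)) F
      (differentiableAt_const _) hdF
  have h2 : (fun y => -∑ α ∈ s, c α * F α y)
      = (fun y => (0:ℂ) * (fun _ => (0:ℂ)) y + ∑ α ∈ s, (-(c α)) * F α y) := by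
    funext y
    rw [zero_mul, zero_add, ← Finset.sum_neg_distrib]
    exact Finset.sum_congr rfl fun α _ => by ring
  rw [h2, h1, zero_mul, zero_add, ← Finset.sum_neg_distrib]
  exact Finset.sum_congr rfl fun α _ => by ring

lemma dunkl_equiv (R Rp : Finset (E N)) (g : E N → ℂ)
    (hR0 : ∀ α ∈ R, α ≠ (0 : E N))
    (hRinv : ∀ α ∈ R, ∀ β ∈ R, sRefl α β ∈ R)
    (hsub : Rp ⊆ R)
    (hpos : ∀ α ∈ R, (α ∈ Rp ∧ -α ∉ Rp) ∨ (-α ∈ Rp ∧ α ∉ Rp))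
    (hg : ∀ α ∈ R, ∀ β ∈ R, g (sRefl β α) = g α)
    (f : E N → ℂ)
    (hf : ContDiffOn ℝ (⊤ : ℕ∞) f {x : E N | ∀ α ∈ R, (inner ℝ α x : ℝ) ≠ 0})
    (x : E N) (hx : ∀ α ∈ R, (inner ℝ α x : ℝ) ≠ 0)
    (α : E N) (hα : α ∈ Rp) (j : Fin N) :
    dunkl Rp g j f (sRefl α x)
      = dunkl Rp g j (refOp α f) x
        - ((2 * α j / (inner ℝ α α : ℝ) : ℝ) : ℂ)
            * ∑ k, (α k : ℂ) * dunkl Rp g k (refOp α f) x := by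
  have hαR : α ∈ R := hsub hα
  have hα0 : α ≠ 0 := hR0 α hαR
  have hyx : ∀ β ∈ R, (inner ℝ β (sRefl α x) : ℝ) ≠ 0 := fun β hβ => by
    rw [inner_sRefl_right]; exact hx _ (hRinv α hαR β hβ)
  have hdy : DifferentiableAt ℝ f (sRefl α x) := aux_diffAt hf hyx
  have hdk : ∀ k : Fin N, dunkl Rp g k (refOp α f) x
      = pd k (refOp α f) x - ∑ β ∈ Rp, g β * (β k : ℂ) * ((inner ℝ β x : ℝ) : ℂ)⁻¹
          * f (sRefl α (sRefl β x)) := fun k => rfl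
  have hLrefl : ∑ β ∈ Rp, g β * (β j : ℂ) * ((inner ℝ β (sRefl α x) : ℝ) : ℂ)⁻¹
        * f (sRefl β (sRefl α x))
      = (∑ β ∈ Rp, g β * (β j : ℂ) * ((inner ℝ β x : ℝ) : ℂ)⁻¹ * f (sRefl α (sRefl β x)))
        - ((2 * α j / (inner ℝ α α : ℝ) : ℝ) : ℂ)
            * ∑ k, (α k : ℂ) * ∑ β ∈ Rp, g β * (β k : ℂ) * ((inner ℝ β x : ℝ) : ℂ)⁻¹
                * f (sRefl α (sRefl β x)) := by
    rw [refl_equiv R Rp g hR0 hRinv hsub hpos hg f x α hα j,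
      refl_expand Rp g f x α j]
  have hLpd := pd_equiv α hα0 f x j hdy
  have hL : dunkl Rp g j f (sRefl α x)
      = pd j f (sRefl α x) - ∑ β ∈ Rp, g β * (β j : ℂ)
          * ((inner ℝ β (sRefl α x) : ℝ) : ℂ)⁻¹ * f (sRefl β (sRefl α x)) := rfl
  have hsub2 : ∑ k, (α k : ℂ) * dunkl Rp g k (refOp α f) x
      = (∑ k, (α k : ℂ) * pd k (refOp α f) x)
        - ∑ k, (α k : ℂ) * ∑ β ∈ Rp, g β * (β k : ℂ) * ((inner ℝ β x : ℝ) : ℂ)⁻¹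
            * f (sRefl α (sRefl β x)) := by
    rw [← Finset.sum_sub_distrib]
    refine Finset.sum_congr rfl fun k _ => ?_
    rw [hdk k]; ring
  rw [hL, hLpd, hLrefl, hsub2, hdk j]
  ring

end Aux3


/-- `Σ_j {x_j, S_{ij}} = 2x_i`, `Σ_j [x_j, S_{ij}] = 2[S, x_i]`,
`Σ_j {∇_j, S_{ij}} = 2∇_i`, `Σ_j [∇_j, S_{ij}] = 2[S, ∇_i]`
as operators on smooth complex functions on Ω. -/
theorem statement3
    (R Rp : Finset (E N)) (g : E N → ℂ)
    (hR0 : ∀ α ∈ R, α ≠ (0 : E N))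
    (hred : ∀ α ∈ R, ∀ c : ℝ, c • α ∈ R → c = 1 ∨ c = -1)
    (hRinv : ∀ α ∈ R, ∀ β ∈ R, sRefl α β ∈ R)
    (hsub : Rp ⊆ R)
    (hpos : ∀ α ∈ R, (α ∈ Rp ∧ -α ∉ Rp) ∨ (-α ∈ Rp ∧ α ∉ Rp))
    (hg : ∀ α ∈ R, ∀ β ∈ R, g (sRefl β α) = g α)
    (i : Fin N)
    (f : E N → ℂ)
    (hf : ContDiffOn ℝ (⊤ : ℕ∞) f {x : E N | ∀ α ∈ R, (inner ℝ α x : ℝ) ≠ 0})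
    (x : E N) (hx : ∀ α ∈ R, (inner ℝ α x : ℝ) ≠ 0) :
    (∑ j, (mulX j (Sop Rp g i j f) x + Sop Rp g i j (mulX j f) x) = 2 * mulX i f x)
    ∧ (∑ j, (mulX j (Sop Rp g i j f) x - Sop Rp g i j (mulX j f) x)
        = 2 * (Sbig Rp g (mulX i f) x - mulX i (Sbig Rp g f) x))
    ∧ (∑ j, (dunkl Rp g j (Sop Rp g i j f) x + Sop Rp g i j (dunkl Rp g j f) x)
        = 2 * dunkl Rp g i f x)
    ∧ (∑ j, (dunkl Rp g j (Sop Rp g i j f) x - Sop Rp g i j (dunkl Rp g j f) x)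
        = 2 * (Sbig Rp g (dunkl Rp g i f) x - dunkl Rp g i (Sbig Rp g f) x)) := by
  open Aux3 in
  classical
  have hdfx : DifferentiableAt ℝ f x := aux_diffAt hf hx
  have hrmem : ∀ α ∈ Rp, ∀ β ∈ R, (inner ℝ β (sRefl α x) : ℝ) ≠ 0 := fun α hα β hβ => by
    rw [inner_sRefl_right]; exact hx _ (hRinv α (hsub hα) β hβ)
  have hdrefl : ∀ α ∈ Rp, DifferentiableAt ℝ (refOp α f) x :=
    fun α hα => aux_diff_refOp (aux_diffAt hf (hrmem α hα))
  have hne : ∀ α ∈ Rp, ((inner ℝ α α : ℝ) : ℂ) ≠ 0 := fun α hα =>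
    Complex.ofReal_ne_zero.mpr (inner_self_ne_zero.mpr (hR0 α (hsub hα)))
  have hEq : ∀ α ∈ Rp, ∀ j : Fin N, dunkl Rp g j f (sRefl α x)
      = dunkl Rp g j (refOp α f) x
        - ((2 * α j / (inner ℝ α α : ℝ) : ℝ) : ℂ)
            * ∑ k, (α k : ℂ) * dunkl Rp g k (refOp α f) x :=
    fun α hα j => dunkl_equiv R Rp g hR0 hRinv hsub hpos hg f hf x hx α hα j
  have hsumc : ∀ α ∈ Rp, ∑ j, (α j : ℂ) * ((2 * α j / (inner ℝ α α : ℝ) : ℝ) : ℂ) = 2 := by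
    intro α hα
    have h1 : ∀ j : Fin N, (α j : ℂ) * ((2 * α j / (inner ℝ α α : ℝ) : ℝ) : ℂ)
        = 2 * ((α j : ℂ) * (α j : ℂ)) / ((inner ℝ α α : ℝ) : ℂ) := by
      intro j; push_cast; ring
    rw [Finset.sum_congr rfl fun j _ => h1 j, ← Finset.sum_div, ← Finset.mul_sum,
      inner_sum_c]
    rw [mul_div_assoc, div_self (hne α hα), mul_one]
  have hB : ∀ α ∈ Rp, ∑ j, (α j : ℂ) * dunkl Rp g j f (sRefl α x)
      = -∑ k, (α k : ℂ) * dunkl Rp g k (refOp α f) x := by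
    intro α hα
    have h1 : ∀ j : Fin N, (α j : ℂ) * dunkl Rp g j f (sRefl α x)
        = (α j : ℂ) * dunkl Rp g j (refOp α f) x
          - ((α j : ℂ) * ((2 * α j / (inner ℝ α α : ℝ) : ℝ) : ℂ))
              * ∑ k, (α k : ℂ) * dunkl Rp g k (refOp α f) x := by
      intro j; rw [hEq α hα j]; ring
    rw [Finset.sum_congr rfl fun j _ => h1 j, Finset.sum_sub_distrib, ← Finset.sum_mul,
      hsumc α hα]
    ring

  -- pointwise expansions used in parts 1 and 2
  have hinner : ∀ (v w : E N) (C : ℂ),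
      ∑ j, (v j : ℂ) * ((w j : ℂ) * C) = ((inner ℝ v w : ℝ) : ℂ) * C := by
    intro v w C
    have h : ∀ j : Fin N, (v j : ℂ) * ((w j : ℂ) * C) = ((v j : ℂ) * (w j : ℂ)) * C :=
      fun j => by ring
    rw [Finset.sum_congr rfl fun j _ => h j, ← Finset.sum_mul, inner_sum_c]
  have hmul : ∀ j : Fin N, mulX j (Sop Rp g i j f) x
      = (if i = j then 1 else 0) * ((x j : ℂ) * f x)
        + ∑ α ∈ Rp, 2 * g α * (α i : ℂ) * (α j : ℂ) / ((inner ℝ α α : ℝ) : ℂ)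
            * ((x j : ℂ) * f (sRefl α x)) := by
    intro j
    show (x j : ℂ) * ((if i = j then 1 else 0) * f x
        + ∑ α ∈ Rp, 2 * g α * (α i : ℂ) * (α j : ℂ) / ((inner ℝ α α : ℝ) : ℂ)
            * refOp α f x) = _
    rw [mul_add, Finset.mul_sum]
    congr 1
    · ring
    · exact Finset.sum_congr rfl fun α _ => by simp only [refOp]; ring
  have hSopmul : ∀ j : Fin N, Sop Rp g i j (mulX j f) x
      = (if i = j then 1 else 0) * ((x j : ℂ) * f x)
        + ∑ α ∈ Rp, 2 * g α * (α i : ℂ) * (α j : ℂ) / ((inner ℝ α α : ℝ) : ℂ)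
            * (((sRefl α x) j : ℂ) * f (sRefl α x)) := fun j => rfl
  have hA1 : ∀ α ∈ Rp, (2 * g α * (α i : ℂ) / ((inner ℝ α α : ℝ) : ℂ))
        * ∑ j, (α j : ℂ) * ((x j : ℂ) * f (sRefl α x))
      = (2 * g α * (α i : ℂ) / ((inner ℝ α α : ℝ) : ℂ))
        * (((inner ℝ α x : ℝ) : ℂ) * f (sRefl α x)) := fun α _ => by rw [hinner]
  have hA2 : ∀ α ∈ Rp, (2 * g α * (α i : ℂ) / ((inner ℝ α α : ℝ) : ℂ))
        * ∑ j, (α j : ℂ) * (((sRefl α x) j : ℂ) * f (sRefl α x))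
      = (2 * g α * (α i : ℂ) / ((inner ℝ α α : ℝ) : ℂ))
        * (((-(inner ℝ α x : ℝ) : ℝ) : ℂ) * f (sRefl α x)) := by
    intro α hα
    rw [hinner α (sRefl α x), inner_self_sRefl α (hR0 α (hsub hα))]
  refine ⟨?_, ?_, ?_, ?_⟩
  · -- Part 1
    rw [Finset.sum_congr rfl fun j _ => by rw [hmul j, hSopmul j]]
    rw [Finset.sum_add_distrib, Finset.sum_add_distrib, Finset.sum_add_distrib,
      delta_sum, swap_collect, swap_collect,
      Finset.sum_congr rfl hA1, Finset.sum_congr rfl hA2]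
    have hXY : (∑ α ∈ Rp, (2 * g α * (α i : ℂ) / ((inner ℝ α α : ℝ) : ℂ))
          * (((inner ℝ α x : ℝ) : ℂ) * f (sRefl α x)))
        + ∑ α ∈ Rp, (2 * g α * (α i : ℂ) / ((inner ℝ α α : ℝ) : ℂ))
          * (((-(inner ℝ α x : ℝ) : ℝ) : ℂ) * f (sRefl α x)) = 0 := by
      rw [← Finset.sum_add_distrib]
      refine Finset.sum_eq_zero fun α hα => ?_
      push_cast
      ring
    show _ = 2 * ((x i : ℂ) * f x)
    linear_combination hXY
  · -- Part 2
    rw [Finset.sum_congr rfl fun j _ => by rw [hmul j, hSopmul j]]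
    rw [Finset.sum_sub_distrib, Finset.sum_add_distrib, Finset.sum_add_distrib,
      delta_sum, swap_collect, swap_collect,
      Finset.sum_congr rfl hA1, Finset.sum_congr rfl hA2]
    have hRHS : 2 * (Sbig Rp g (mulX i f) x - mulX i (Sbig Rp g f) x)
        = ∑ α ∈ Rp, 2 * g α * (((x i : ℂ)) - ((sRefl α x) i : ℂ)) * f (sRefl α x) := by
      show 2 * ((-∑ α ∈ Rp, g α * (((sRefl α x) i : ℂ) * f (sRefl α x)))
          - (x i : ℂ) * (-∑ α ∈ Rp, g α * f (sRefl α x))) = _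
      rw [mul_neg, sub_neg_eq_add, Finset.mul_sum, ← Finset.sum_neg_distrib,
        ← Finset.sum_add_distrib, Finset.mul_sum]
      refine Finset.sum_congr rfl fun α _ => by ring
    rw [hRHS]
    have hC : (∑ α ∈ Rp, (2 * g α * (α i : ℂ) / ((inner ℝ α α : ℝ) : ℂ))
          * (((inner ℝ α x : ℝ) : ℂ) * f (sRefl α x)))
        - ∑ α ∈ Rp, (2 * g α * (α i : ℂ) / ((inner ℝ α α : ℝ) : ℂ))
          * (((-(inner ℝ α x : ℝ) : ℝ) : ℂ) * f (sRefl α x))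
        = ∑ α ∈ Rp, 2 * g α * (((x i : ℂ)) - ((sRefl α x) i : ℂ)) * f (sRefl α x) := by
      rw [← Finset.sum_sub_distrib]
      refine Finset.sum_congr rfl fun α hα => ?_
      rw [show (sRefl α x) i = x i - (2 * (inner ℝ α x : ℝ) / (inner ℝ α α : ℝ)) * α i from
        sRefl_coord α x i]
      push_cast
      ring
    linear_combination hC
  · -- Part 3
    have hSopL : ∀ j : Fin N, dunkl Rp g j (Sop Rp g i j f) x
        = (if i = j then 1 else 0) * dunkl Rp g j f x
          + ∑ α ∈ Rp, 2 * g α * (α i : ℂ) * (α j : ℂ) / ((inner ℝ α α : ℝ) : ℂ)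
              * dunkl Rp g j (refOp α f) x := by
      intro j
      exact dunkl_lincomb Rp g j x (if i = j then 1 else 0) f Rp
        (fun α => 2 * g α * (α i : ℂ) * (α j : ℂ) / ((inner ℝ α α : ℝ) : ℂ))
        (fun α => refOp α f) hdfx hdrefl
    have hSopR : ∀ j : Fin N, Sop Rp g i j (dunkl Rp g j f) x
        = (if i = j then 1 else 0) * dunkl Rp g j f x
          + ∑ α ∈ Rp, 2 * g α * (α i : ℂ) * (α j : ℂ) / ((inner ℝ α α : ℝ) : ℂ)
              * dunkl Rp g j f (sRefl α x) := fun j => rfl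
    rw [Finset.sum_congr rfl fun j _ => by rw [hSopL j, hSopR j]]
    rw [Finset.sum_add_distrib, Finset.sum_add_distrib, Finset.sum_add_distrib,
      delta_sum, swap_collect, swap_collect,
      Finset.sum_congr rfl (fun α hα => by rw [hB α hα] :
        ∀ α ∈ Rp, (2 * g α * (α i : ℂ) / ((inner ℝ α α : ℝ) : ℂ))
            * ∑ j, (α j : ℂ) * dunkl Rp g j f (sRefl α x)
          = (2 * g α * (α i : ℂ) / ((inner ℝ α α : ℝ) : ℂ))
            * -∑ k, (α k : ℂ) * dunkl Rp g k (refOp α f) x)]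
    have hXY : (∑ α ∈ Rp, (2 * g α * (α i : ℂ) / ((inner ℝ α α : ℝ) : ℂ))
          * ∑ j, (α j : ℂ) * dunkl Rp g j (refOp α f) x)
        + ∑ α ∈ Rp, (2 * g α * (α i : ℂ) / ((inner ℝ α α : ℝ) : ℂ))
          * -∑ k, (α k : ℂ) * dunkl Rp g k (refOp α f) x = 0 := by
      rw [← Finset.sum_add_distrib]
      exact Finset.sum_eq_zero fun α hα => by ring
    linear_combination hXY
  · -- Part 4
    have hSopL : ∀ j : Fin N, dunkl Rp g j (Sop Rp g i j f) x
        = (if i = j then 1 else 0) * dunkl Rp g j f x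
          + ∑ α ∈ Rp, 2 * g α * (α i : ℂ) * (α j : ℂ) / ((inner ℝ α α : ℝ) : ℂ)
              * dunkl Rp g j (refOp α f) x := by
      intro j
      exact dunkl_lincomb Rp g j x (if i = j then 1 else 0) f Rp
        (fun α => 2 * g α * (α i : ℂ) * (α j : ℂ) / ((inner ℝ α α : ℝ) : ℂ))
        (fun α => refOp α f) hdfx hdrefl
    have hSopR : ∀ j : Fin N, Sop Rp g i j (dunkl Rp g j f) x
        = (if i = j then 1 else 0) * dunkl Rp g j f x
          + ∑ α ∈ Rp, 2 * g α * (α i : ℂ) * (α j : ℂ) / ((inner ℝ α α : ℝ) : ℂ)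
              * dunkl Rp g j f (sRefl α x) := fun j => rfl
    rw [Finset.sum_congr rfl fun j _ => by rw [hSopL j, hSopR j]]
    rw [Finset.sum_sub_distrib, Finset.sum_add_distrib, Finset.sum_add_distrib,
      delta_sum, swap_collect, swap_collect,
      Finset.sum_congr rfl (fun α hα => by rw [hB α hα] :
        ∀ α ∈ Rp, (2 * g α * (α i : ℂ) / ((inner ℝ α α : ℝ) : ℂ))
            * ∑ j, (α j : ℂ) * dunkl Rp g j f (sRefl α x)
          = (2 * g α * (α i : ℂ) / ((inner ℝ α α : ℝ) : ℂ))
            * -∑ k, (α k : ℂ) * dunkl Rp g k (refOp α f) x)]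
    have hRHS : 2 * (Sbig Rp g (dunkl Rp g i f) x - dunkl Rp g i (Sbig Rp g f) x)
        = ∑ α ∈ Rp, 2 * (g α * (((2 * α i / (inner ℝ α α : ℝ) : ℝ) : ℂ)
            * ∑ k, (α k : ℂ) * dunkl Rp g k (refOp α f) x)) := by
      have h1 : dunkl Rp g i (Sbig Rp g f) x
          = -∑ α ∈ Rp, g α * dunkl Rp g i (refOp α f) x :=
        dunkl_negsum Rp g i x Rp g (fun α => refOp α f) hdrefl
      have h2 : Sbig Rp g (dunkl Rp g i f) x
          = -∑ α ∈ Rp, g α * dunkl Rp g i f (sRefl α x) := rfl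
      rw [h1, h2, sub_neg_eq_add, ← Finset.sum_neg_distrib, ← Finset.sum_add_distrib,
        Finset.mul_sum]
      refine Finset.sum_congr rfl fun α hα => ?_
      rw [hEq α hα i]
      ring
    rw [hRHS]
    have hC : (∑ α ∈ Rp, (2 * g α * (α i : ℂ) / ((inner ℝ α α : ℝ) : ℂ))
          * ∑ j, (α j : ℂ) * dunkl Rp g j (refOp α f) x)
        - ∑ α ∈ Rp, (2 * g α * (α i : ℂ) / ((inner ℝ α α : ℝ) : ℂ))
          * -∑ k, (α k : ℂ) * dunkl Rp g k (refOp α f) x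
        = ∑ α ∈ Rp, 2 * (g α * (((2 * α i / (inner ℝ α α : ℝ) : ℝ) : ℂ)
            * ∑ k, (α k : ℂ) * dunkl Rp g k (refOp α f) x)) := by
      rw [← Finset.sum_sub_distrib]
      refine Finset.sum_congr rfl fun α hα => ?_
      push_cast
      ring
    linear_combination hC
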